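/- Let X be a proper discrete metric space with bounded geometry and H an ample X-module. Every locally compact operator T on H with finite propagation is strongly quasi-local: for every ε > 0 there exist δ, R > 0 such that for every map g : X → K(𝓗)₁ with (δ, R)-variation, ‖[T ⊗ Id_𝓗, Λ(g)]‖ < ε. Consequently the Roe algebra C*(H) is contained in the strongly quasi-local algebra C*_{sq}(H). -/

import Mathlib

lemma aux19_proj_norm_le_one {H : Type*} [NormedAddCommGroup H] [InnerProductSpace ℂ H]
    [CompleteSpace H] (p : H →L[ℂ] H) (h1 : p ∘L p = p) (h2 : IsSelfAdjoint p) : ‖p‖ ≤ 1 := by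
  have hm : star p * p = p := by rw [h2.star_eq, ContinuousLinearMap.mul_def]; exact h1
  have h := CStarRing.norm_star_mul_self (x := p)
  rw [hm] at h
  nlinarith [norm_nonneg p]

lemma aux19_parseval {ι HH : Type*} [NormedAddCommGroup HH] [InnerProductSpace ℂ HH]
    [CompleteSpace HH] (P : ι → HH →L[ℂ] HH) (hidem : ∀ x, P x ∘L P x = P x)
    (hsa : ∀ x, IsSelfAdjoint (P x)) (u : HH) (hsum : HasSum (fun x => P x u) u) :
    HasSum (fun x => ‖P x u‖ ^ 2) (‖u‖ ^ 2) := by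
  have h1 : HasSum (fun x => (inner ℂ u (P x u) : ℂ)) (inner ℂ u u) :=
    (innerSL ℂ u).hasSum hsum
  have h2 : ∀ x, (inner ℂ u (P x u) : ℂ) = ((‖P x u‖ ^ 2 : ℝ) : ℂ) := by
    intro x
    have hpp : P x (P x u) = P x u := by
      conv_rhs => rw [← hidem x]
      rfl
    calc (inner ℂ u (P x u) : ℂ) = inner ℂ u (P x (P x u)) := by rw [hpp]
      _ = inner ℂ ((ContinuousLinearMap.adjoint (P x)) u) (P x u) :=
          (ContinuousLinearMap.adjoint_inner_left _ _ _).symm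
      _ = inner ℂ (P x u) (P x u) := by
          rw [← ContinuousLinearMap.star_eq_adjoint, (hsa x).star_eq]
      _ = ((‖P x u‖ ^ 2 : ℝ) : ℂ) := by
          rw [inner_self_eq_norm_sq_to_K]
          norm_cast
  simp only [h2] at h1
  have h3 := Complex.reCLM.hasSum h1
  simpa [← inner_self_eq_norm_sq (𝕜 := ℂ)] using h3


/-- Every locally compact operator of finite propagation on an ample module over a proper
discrete bounded-geometry metric space is strongly quasi-local; consequently the Roe
algebra is contained in the strongly quasi-local algebra.

Setup: `χ x` are the orthogonal point projections of the module `H`; `HH` plays the role of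
`H ⊗ 𝓗` (with `𝓗 = E` the fixed separable Hilbert space) via an abstract elementary-tensor
map `ot` (`ot a b` represents `a ⊗ b`), additive in each variable, multiplicative,
star-preserving, unital and with the cross-norm `‖a ⊗ b‖ = ‖a‖‖b‖`; the amplified point
projections `χ_x ⊗ 1` again sum strongly to the identity.  `T` is locally compact with
propagation at most `R₀`.  Conclusion: for every `ε > 0` there are `δ, R > 0` such that for
every map `g : X → K(𝓗)₁` with `(δ, R)`-variation, the operator `Λ(g)` (characterised by
`Λ(g)(χ_x ⊗ 1) = (χ_x ⊗ 1)Λ(g) = χ_x ⊗ g(x)`) satisfies `‖[T ⊗ Id, Λ(g)]‖ < ε`. -/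
theorem stmt19 {X : Type*} [MetricSpace X] [ProperSpace X] [DiscreteTopology X]
    (hbg : ∀ r > (0 : ℝ), ∃ N : ℕ, ∀ x : X,
      (Metric.ball x r).Finite ∧ (Metric.ball x r).ncard ≤ N)
    {H E HH : Type*}
    [NormedAddCommGroup H] [InnerProductSpace ℂ H] [CompleteSpace H]
    [NormedAddCommGroup E] [InnerProductSpace ℂ E] [CompleteSpace E]
    [NormedAddCommGroup HH] [InnerProductSpace ℂ HH] [CompleteSpace HH]
    (χ : X → H →L[ℂ] H)
    (hidem : ∀ x, χ x ∘L χ x = χ x)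
    (hsa : ∀ x, IsSelfAdjoint (χ x))
    (horth : ∀ x y, x ≠ y → χ x ∘L χ y = 0)
    (hcomplete : ∀ v : H, HasSum (fun x => χ x v) v)
    (ot : (H →L[ℂ] H) → (E →L[ℂ] E) → (HH →L[ℂ] HH))
    (hmul : ∀ a a' b b', ot a b ∘L ot a' b' = ot (a ∘L a') (b ∘L b'))
    (hadd₁ : ∀ a a' b, ot (a + a') b = ot a b + ot a' b)
    (hadd₂ : ∀ a b b', ot a (b + b') = ot a b + ot a b')
    (hneg₂ : ∀ a b, ot a (-b) = -ot a b)
    (hstar : ∀ a b, ot (star a) (star b) = star (ot a b))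
    (hone : ot 1 1 = 1)
    (hnorm : ∀ a b, ‖ot a b‖ = ‖a‖ * ‖b‖)
    (hcomplete' : ∀ w : HH, HasSum (fun x => ot (χ x) 1 w) w)
    (T : H →L[ℂ] H) (R₀ : ℝ) (hR₀ : 0 ≤ R₀)
    (hTprop : ∀ x y : X, R₀ < dist x y → χ x ∘L T ∘L χ y = 0)
    (hTlc : ∀ x : X, IsCompactOperator (χ x ∘L T) ∧ IsCompactOperator (T ∘L χ x)) :
    ∀ ε > (0 : ℝ), ∃ δ > (0 : ℝ), ∃ R > (0 : ℝ),
      ∀ g : X → E →L[ℂ] E,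
        (∀ x, IsCompactOperator (g x)) → (∀ x, ‖g x‖ ≤ 1) →
        (∀ x y : X, dist x y < R → ‖g x - g y‖ < δ) →
        ∀ L : HH →L[ℂ] HH,
          (∀ x, L ∘L ot (χ x) 1 = ot (χ x) (g x)) →
          (∀ x, ot (χ x) 1 ∘L L = ot (χ x) (g x)) →
          ‖ot T 1 ∘L L - L ∘L ot T 1‖ < ε := by
  classical
  intro ε hε
  obtain ⟨N, hN⟩ := hbg (R₀ + 1) (by linarith)
  set δ : ℝ := ε / ((N + 1) * (‖T‖ + 1)) with hδdef
  have hδpos : 0 < δ := by positivity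
  refine ⟨δ, hδpos, R₀ + 1, by linarith, ?_⟩
  intro g hgc hgn hgvar L hL1 hL2
  -- basic `ot` facts
  have hot0 : ∀ b, ot 0 b = 0 := by
    intro b
    have h := hadd₁ 0 0 b
    rw [add_zero] at h
    exact (left_eq_add.mp h)
  have hsub₂ : ∀ a b b', ot a (b - b') = ot a b - ot a b' := by
    intro a b b'
    rw [sub_eq_add_neg, hadd₂, hneg₂, sub_eq_add_neg]
  have hmul' : ∀ a a' b b', (ot a b) * (ot a' b') = ot (a * a') (b * b') := by
    intro a a' b b'
    simp only [ContinuousLinearMap.mul_def]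
    exact hmul a a' b b'
  set P : X → HH →L[ℂ] HH := fun x => ot (χ x) 1 with hPdef
  have hPapp : ∀ x, P x = ot (χ x) 1 := fun _ => rfl
  have hcomplete'' : ∀ w : HH, HasSum (fun x => P x w) w := by
    intro w; simpa only [hPapp] using hcomplete' w
  have hPidem : ∀ x, P x ∘L P x = P x := by
    intro x
    have h11 : (1 : E →L[ℂ] E) ∘L 1 = 1 := mul_one 1
    rw [hPapp, hmul, hidem, h11]
  have hPidem' : ∀ x, P x * P x = P x := by
    intro x; rw [ContinuousLinearMap.mul_def]; exact hPidem x
  have hPsa : ∀ x, IsSelfAdjoint (P x) := by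
    intro x
    show star (P x) = P x
    rw [hPapp, ← hstar, (hsa x).star_eq, star_one]
  have hχnorm : ∀ x, ‖χ x‖ ≤ 1 := fun x => aux19_proj_norm_le_one (χ x) (hidem x) (hsa x)
  have hPnorm : ∀ x, ‖P x‖ ≤ 1 := by
    intro x
    rw [hPapp, hnorm]
    have h1 : ‖(1 : E →L[ℂ] E)‖ ≤ 1 := by
      rw [ContinuousLinearMap.one_def]; exact ContinuousLinearMap.norm_id_le
    exact mul_le_one₀ (hχnorm x) (norm_nonneg _) h1
  set S : HH →L[ℂ] HH := ot T 1 ∘L L - L ∘L ot T 1 with hSdef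
  have hS' : S = ot T 1 * L - L * ot T 1 := rfl
  have hL1' : ∀ x, L * P x = ot (χ x) (g x) := fun x => hL1 x
  have hL2' : ∀ x, P x * L = ot (χ x) (g x) := fun x => hL2 x
  have hTprop' : ∀ x y, R₀ < dist x y → χ x * T * χ y = 0 := by
    intro x y h
    rw [mul_assoc]
    exact hTprop x y h
  -- the entry formula
  have hentry : ∀ x y, P x * S * P y = ot (χ x * T * χ y) (g y - g x) := by
    intro x y
    have e1 : P x * S * P y
        = (P x * ot T 1) * (L * P y) - (P x * L) * (ot T 1 * P y) := by
      rw [hS']; noncomm_ring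
    rw [e1, hL1' y, hL2' x, hPapp x, hPapp y, hmul', hmul', hmul', hmul']
    simp only [one_mul, mul_one, mul_assoc, hsub₂]
  have hMnn : 0 ≤ ‖T‖ * δ := by positivity
  have hentrynorm : ∀ x y, ‖P x * S * P y‖ ≤ ‖T‖ * δ := by
    intro x y
    rw [hentry x y, hnorm]
    by_cases hd : R₀ < dist x y
    · rw [hTprop' x y hd]
      simpa using hMnn
    · push_neg at hd
      have h1 : ‖χ x * T * χ y‖ ≤ ‖T‖ := by
        calc ‖χ x * T * χ y‖ ≤ ‖χ x * T‖ * ‖χ y‖ := norm_mul_le _ _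
          _ ≤ ‖χ x * T‖ * 1 := mul_le_mul_of_nonneg_left (hχnorm y) (norm_nonneg _)
          _ = ‖χ x * T‖ := mul_one _
          _ ≤ ‖χ x‖ * ‖T‖ := norm_mul_le _ _
          _ ≤ 1 * ‖T‖ := mul_le_mul_of_nonneg_right (hχnorm x) (norm_nonneg _)
          _ = ‖T‖ := one_mul _
      have h2 : ‖g y - g x‖ ≤ δ := by
        have := hgvar y x (by rw [dist_comm]; linarith)
        linarith
      exact mul_le_mul h1 h2 (norm_nonneg _) (norm_nonneg T)
  have hentryzero : ∀ x y, ¬ dist y x < R₀ + 1 → P x * S * P y = 0 := by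
    intro x y h
    push_neg at h
    rw [hentry x y, hTprop' x y (by rw [dist_comm]; linarith), hot0]
  -- Parseval
  have hpar : ∀ u : HH, HasSum (fun x => ‖P x u‖ ^ 2) (‖u‖ ^ 2) :=
    fun u => aux19_parseval P hPidem hPsa u (hcomplete'' u)
  -- finite balls
  set F : X → Finset X := fun x => (hN x).1.toFinset with hFdef
  have hFmem : ∀ x y, y ∈ F x ↔ dist y x < R₀ + 1 := by
    intro x y
    simp [hFdef, Set.Finite.mem_toFinset, Metric.mem_ball]
  have hFcard : ∀ x, ((F x).card : ℝ) ≤ N := by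
    intro x
    have h := (hN x).2
    rw [Set.ncard_eq_toFinset_card _ (hN x).1] at h
    exact_mod_cast h
  -- main pointwise estimate
  have hmain : ∀ v : HH, ‖S v‖ ≤ ((N : ℝ) * (‖T‖ * δ)) * ‖v‖ := by
    intro v
    have hA : ∀ x, P x (S v) = ∑ y ∈ F x, (P x * S * P y) v := by
      intro x
      have h1 : HasSum (fun y => (P x ∘L S) (P y v)) ((P x ∘L S) v) :=
        (P x ∘L S).hasSum (hcomplete'' v)
      have h2 : ∀ y ∉ F x, (P x ∘L S) (P y v) = 0 := by
        intro y hy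
        have hz : P x * S * P y = 0 := hentryzero x y (by rwa [← hFmem x y])
        have he : (P x ∘L S) (P y v) = (P x * S * P y) v := rfl
        rw [he, hz]
        rfl
      have h3 : HasSum (fun y => (P x ∘L S) (P y v)) (∑ y ∈ F x, (P x ∘L S) (P y v)) :=
        hasSum_sum_of_ne_finset_zero h2
      exact h1.unique h3
    have hC : ∀ x, ‖P x (S v)‖ ^ 2
        ≤ ((‖T‖ * δ) ^ 2 * N) * ∑ y ∈ F x, ‖P y v‖ ^ 2 := by
      intro x
      have hB : ‖P x (S v)‖ ≤ (‖T‖ * δ) * ∑ y ∈ F x, ‖P y v‖ := by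
        rw [hA x]
        calc ‖∑ y ∈ F x, (P x * S * P y) v‖ ≤ ∑ y ∈ F x, ‖(P x * S * P y) v‖ :=
              norm_sum_le _ _
          _ ≤ ∑ y ∈ F x, (‖T‖ * δ) * ‖P y v‖ := by
              refine Finset.sum_le_sum (fun y hy => ?_)
              have he : (P x * S * P y) v = (P x * S * P y) (P y v) := by
                conv_lhs => rw [show P x * S * P y = (P x * S * P y) * P y by
                  rw [mul_assoc (P x * S) (P y) (P y), hPidem' y]]
                rfl
              rw [he]
              calc ‖(P x * S * P y) (P y v)‖ ≤ ‖P x * S * P y‖ * ‖P y v‖ :=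
                    ContinuousLinearMap.le_opNorm _ _
                _ ≤ (‖T‖ * δ) * ‖P y v‖ :=
                    mul_le_mul_of_nonneg_right (hentrynorm x y) (norm_nonneg _)
          _ = (‖T‖ * δ) * ∑ y ∈ F x, ‖P y v‖ := by rw [Finset.mul_sum]
      have h5 : (∑ y ∈ F x, ‖P y v‖) ^ 2 ≤ (N : ℝ) * ∑ y ∈ F x, ‖P y v‖ ^ 2 := by
        have hcs := Finset.sum_mul_sq_le_sq_mul_sq (F x) (fun _ => (1 : ℝ)) (fun y => ‖P y v‖)
        simp only [one_mul, one_pow] at hcs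
        have hcard : (∑ _y ∈ F x, (1 : ℝ)) = (F x).card := by simp
        rw [hcard] at hcs
        calc (∑ y ∈ F x, ‖P y v‖) ^ 2 ≤ ((F x).card : ℝ) * ∑ y ∈ F x, ‖P y v‖ ^ 2 := hcs
          _ ≤ (N : ℝ) * ∑ y ∈ F x, ‖P y v‖ ^ 2 := by
              refine mul_le_mul_of_nonneg_right (hFcard x) ?_
              exact Finset.sum_nonneg (fun y _ => sq_nonneg _)
      have hsq : ‖P x (S v)‖ ^ 2 ≤ ((‖T‖ * δ) * ∑ y ∈ F x, ‖P y v‖) ^ 2 :=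
        pow_le_pow_left₀ (norm_nonneg _) hB 2
      calc ‖P x (S v)‖ ^ 2 ≤ ((‖T‖ * δ) * ∑ y ∈ F x, ‖P y v‖) ^ 2 := hsq
        _ = (‖T‖ * δ) ^ 2 * (∑ y ∈ F x, ‖P y v‖) ^ 2 := by ring
        _ ≤ (‖T‖ * δ) ^ 2 * ((N : ℝ) * ∑ y ∈ F x, ‖P y v‖ ^ 2) :=
            mul_le_mul_of_nonneg_left h5 (sq_nonneg _)
        _ = ((‖T‖ * δ) ^ 2 * N) * ∑ y ∈ F x, ‖P y v‖ ^ 2 := by ring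
    have hD : ∀ A : Finset X, ∑ x ∈ A, ∑ y ∈ F x, ‖P y v‖ ^ 2 ≤ (N : ℝ) * ‖v‖ ^ 2 := by
      intro A
      set B := A.biUnion F with hBdef
      have e1 : ∀ x ∈ A, ∑ y ∈ F x, ‖P y v‖ ^ 2
          = ∑ y ∈ B, if y ∈ F x then ‖P y v‖ ^ 2 else 0 := by
        intro x hx
        rw [Finset.sum_ite_mem,
          Finset.inter_eq_right.mpr (Finset.subset_biUnion_of_mem F hx)]
      rw [Finset.sum_congr rfl e1, Finset.sum_comm]
      have e2 : ∀ y ∈ B, (∑ x ∈ A, if y ∈ F x then ‖P y v‖ ^ 2 else 0)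
          ≤ (N : ℝ) * ‖P y v‖ ^ 2 := by
        intro y _
        rw [← Finset.sum_filter, Finset.sum_const, nsmul_eq_mul]
        have hcard : (((A.filter (fun x => y ∈ F x)).card : ℝ)) ≤ N := by
          have hsub2 : A.filter (fun x => y ∈ F x) ⊆ (hN y).1.toFinset := by
            intro x hx
            have hmem := (Finset.mem_filter.mp hx).2
            rw [hFmem] at hmem
            simp only [Set.Finite.mem_toFinset, Metric.mem_ball]
            rw [dist_comm]; exact hmem
          have := Finset.card_le_card hsub2
          have h2 := (hN y).2
          rw [Set.ncard_eq_toFinset_card _ (hN y).1] at h2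
          exact_mod_cast le_trans this h2
        exact mul_le_mul_of_nonneg_right hcard (sq_nonneg _)
      calc (∑ y ∈ B, ∑ x ∈ A, if y ∈ F x then ‖P y v‖ ^ 2 else 0)
          ≤ ∑ y ∈ B, (N : ℝ) * ‖P y v‖ ^ 2 := Finset.sum_le_sum e2
        _ = (N : ℝ) * ∑ y ∈ B, ‖P y v‖ ^ 2 := by rw [Finset.mul_sum]
        _ ≤ (N : ℝ) * ‖v‖ ^ 2 := by
            refine mul_le_mul_of_nonneg_left ?_ (Nat.cast_nonneg N)
            exact sum_le_hasSum B (fun y _ => sq_nonneg _) (hpar v)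
    have hE : ‖S v‖ ^ 2 ≤ ((N : ℝ) * (‖T‖ * δ)) ^ 2 * ‖v‖ ^ 2 := by
      refine hasSum_le_of_sum_le (hpar (S v)) ?_
      intro A
      calc ∑ x ∈ A, ‖P x (S v)‖ ^ 2
          ≤ ∑ x ∈ A, ((‖T‖ * δ) ^ 2 * N) * ∑ y ∈ F x, ‖P y v‖ ^ 2 :=
            Finset.sum_le_sum (fun x _ => hC x)
        _ = ((‖T‖ * δ) ^ 2 * N) * ∑ x ∈ A, ∑ y ∈ F x, ‖P y v‖ ^ 2 := by
            rw [Finset.mul_sum]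
        _ ≤ ((‖T‖ * δ) ^ 2 * N) * ((N : ℝ) * ‖v‖ ^ 2) := by
            refine mul_le_mul_of_nonneg_left (hD A) ?_
            positivity
        _ = ((N : ℝ) * (‖T‖ * δ)) ^ 2 * ‖v‖ ^ 2 := by ring
    have hK : 0 ≤ ((N : ℝ) * (‖T‖ * δ)) * ‖v‖ := by positivity
    nlinarith [norm_nonneg (S v), hE, hK]
  have hSnorm : ‖S‖ ≤ (N : ℝ) * (‖T‖ * δ) :=
    ContinuousLinearMap.opNorm_le_bound _ (by positivity) hmain
  have hfinal : (N : ℝ) * (‖T‖ * δ) < ε := by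
    have hD : (0 : ℝ) < ((N : ℝ) + 1) * (‖T‖ + 1) := by positivity
    rw [hδdef]
    rw [show (N : ℝ) * (‖T‖ * (ε / (((N : ℝ) + 1) * (‖T‖ + 1))))
        = ((N : ℝ) * ‖T‖) * ε / (((N : ℝ) + 1) * (‖T‖ + 1)) by ring]
    rw [div_lt_iff₀ hD]
    have hlt : (N : ℝ) * ‖T‖ < ((N : ℝ) + 1) * (‖T‖ + 1) := by
      nlinarith [norm_nonneg T, Nat.cast_nonneg (α := ℝ) N]
    nlinarith [norm_nonneg T, Nat.cast_nonneg (α := ℝ) N, hε]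
  calc ‖ot T 1 ∘L L - L ∘L ot T 1‖ = ‖S‖ := by rw [hSdef]
    _ ≤ (N : ℝ) * (‖T‖ * δ) := hSnorm
    _ < ε := hfinal
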